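/- Let Δ: ℝ_+^J → ℝ_+^I map w to the unique minimizer of the strictly convex coercive function F over the feasible set S(w) = {n ∈ ℝ_+^I : AM^{-1}n ≥ w}. Then Δ is continuous on ℝ_+^J. -/

import Mathlib

private lemma stmt19_rpow_le {p x D : ℝ} (hp : 0 < p) (hx : 0 ≤ x) (hD : 0 ≤ D)
    (h : x ^ p ≤ D) : x ≤ D ^ (1 / p) := by
  by_contra hxR
  push_neg at hxR
  have hR : 0 ≤ D ^ (1 / p) := Real.rpow_nonneg hD _
  have h2 := Real.rpow_lt_rpow hR hxR hp
  rw [← Real.rpow_mul hD, one_div_mul_cancel hp.ne', Real.rpow_one] at h2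
  linarith

set_option maxHeartbeats 1000000 in
/-- Continuity of the lifting map: if `Δ(w)` is the unique minimizer of the strictly
convex coercive `F(n) = (1/(α+1)) Σ_i ν_i κ_i μ_i^{α-1} (n_i/ν_i)^{α+1}` over
`S(w) = {n ∈ ℝ_+^I : AM⁻¹n ≥ w}`, then `Δ` is continuous on `ℝ_+^J`. -/
theorem stmt19 {I J : ℕ} (α : ℝ) (hα : 0 < α)
    (ν μ κ : Fin I → ℝ) (hν : ∀ i, 0 < ν i) (hμ : ∀ i, 0 < μ i) (hκ : ∀ i, 0 < κ i)
    (A : Matrix (Fin J) (Fin I) ℝ)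
    (hA0 : ∀ j i, 0 ≤ A j i) (hArank : A.rank = J)
    (F : (Fin I → ℝ) → ℝ)
    (hF : ∀ n, F n = (1 / (α + 1)) * ∑ i, ν i * κ i * μ i ^ (α - 1) * (n i / ν i) ^ (α + 1))
    (Δ : (Fin J → ℝ) → (Fin I → ℝ))
    (hΔ : ∀ w : Fin J → ℝ, (∀ j, 0 ≤ w j) →
      ((∀ i, 0 ≤ Δ w i) ∧ ∀ j, w j ≤ ∑ i, A j i * Δ w i / μ i) ∧
      ∀ m : Fin I → ℝ, ((∀ i, 0 ≤ m i) ∧ ∀ j, w j ≤ ∑ i, A j i * m i / μ i) →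
        m ≠ Δ w → F (Δ w) < F m) :
    ContinuousOn Δ {w | ∀ j, 0 ≤ w j} := by
  have hα1 : (0:ℝ) < α + 1 := by linarith
  -- row sums are positive
  have hrow : ∀ j, 0 < ∑ i, A j i := by
    intro j
    have hsurj : LinearMap.range A.mulVecLin = ⊤ := by
      apply Submodule.eq_top_of_finrank_eq
      rw [← Matrix.rank, hArank, Module.finrank_pi]
      simp
    have : (Pi.single j 1 : Fin J → ℝ) ∈ LinearMap.range A.mulVecLin := by
      rw [hsurj]; trivial
    obtain ⟨x, hx⟩ := this
    have hxj : ∑ i, A j i * x i = 1 := by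
      have := congrFun hx j
      simpa [Matrix.mulVecLin, Matrix.mulVec, dotProduct] using this
    have hex : ∃ i ∈ Finset.univ, 0 < A j i := by
      by_contra hc
      push_neg at hc
      have : ∑ i, A j i * x i = 0 := by
        refine Finset.sum_eq_zero fun i _ => ?_
        have : A j i = 0 := le_antisymm (hc i (Finset.mem_univ i)) (hA0 j i)
        simp [this]
      rw [hxj] at this; norm_num at this
    exact Finset.sum_pos' (fun i _ => hA0 j i) hex
  -- continuity of F
  have hFc : Continuous F := by
    have : F = fun n => (1 / (α + 1)) *
        ∑ i, ν i * κ i * μ i ^ (α - 1) * (n i / ν i) ^ (α + 1) := funext hF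
    rw [this]
    refine continuous_const.mul (continuous_finset_sum _ fun i _ => continuous_const.mul ?_)
    exact ((continuous_apply i).div_const _).rpow_const fun _ => Or.inr (by linarith)
  -- coefficient positivity
  set a : Fin I → ℝ := fun i => ν i * κ i * μ i ^ (α - 1) with ha_def
  have ha : ∀ i, 0 < a i := fun i =>
    mul_pos (mul_pos (hν i) (hκ i)) (Real.rpow_pos_of_pos (hμ i) _)
  have hterm : ∀ (n : Fin I → ℝ), (∀ i, 0 ≤ n i) → ∀ i, 0 ≤ a i * (n i / ν i) ^ (α + 1) :=
    fun n hn i => mul_nonneg (ha i).le (Real.rpow_nonneg (div_nonneg (hn i) (hν i).le) _)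
  -- coordinatewise bound from a bound on F
  have hcoord : ∀ (B : ℝ) (n : Fin I → ℝ), (∀ i, 0 ≤ n i) → F n ≤ B →
      ∀ i, n i ≤ ν i * (max ((α + 1) * B / a i) 0) ^ (1 / (α + 1)) := by
    intro B n hn hFn i
    rw [hF n] at hFn
    have hsum : ∑ i, a i * (n i / ν i) ^ (α + 1) ≤ (α + 1) * B := by
      have := mul_le_mul_of_nonneg_left hFn hα1.le
      rwa [← mul_assoc, mul_one_div_cancel hα1.ne', one_mul] at this
    have hsingle : a i * (n i / ν i) ^ (α + 1) ≤ (α + 1) * B :=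
      le_trans (Finset.single_le_sum (fun i _ => hterm n hn i) (Finset.mem_univ i)) hsum
    have hx : (n i / ν i) ^ (α + 1) ≤ max ((α + 1) * B / a i) 0 := by
      refine le_max_of_le_left ?_
      rw [le_div_iff₀ (ha i)]
      linarith [hsingle, mul_comm ((n i / ν i) ^ (α + 1)) (a i)]
    have := stmt19_rpow_le hα1 (div_nonneg (hn i) (hν i).le) (le_max_right _ _) hx
    calc n i = (n i / ν i) * ν i := (div_mul_cancel₀ (n i) (hν i).ne').symm
    _ ≤ (max ((α + 1) * B / a i) 0) ^ (1 / (α + 1)) * ν i :=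
        mul_le_mul_of_nonneg_right this (hν i).le
    _ = ν i * (max ((α + 1) * B / a i) 0) ^ (1 / (α + 1)) := mul_comm _ _
  -- feasibility helper: scaled μ vectors
  have hfeas : ∀ t : ℝ, ∀ j, ∑ i, A j i * (t * μ i) / μ i = t * ∑ i, A j i := by
    intro t j
    rw [Finset.mul_sum]
    refine Finset.sum_congr rfl fun i _ => ?_
    have hμi := (hμ i).ne'
    field_simp
  -- main argument
  intro w₀ hw₀
  rw [ContinuousWithinAt, Filter.tendsto_iff_seq_tendsto]
  intro u hu
  rw [tendsto_nhdsWithin_iff] at hu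
  obtain ⟨hu1, hu2⟩ := hu
  -- uniform bound on the sequence w
  choose C hC using fun j => (tendsto_pi_nhds.1 hu1 j).bddAbove_range
  set Cm : ℝ := ∑ j, max (C j) 0 with hCm_def
  have hCb : ∀ k j, u k j ≤ Cm := by
    intro k j
    have h1 : u k j ≤ max (C j) 0 := le_trans (hC j ⟨k, rfl⟩) (le_max_left _ _)
    exact le_trans h1 (Finset.single_le_sum (f := fun j => max (C j) 0)
      (fun j _ => le_max_right _ _) (Finset.mem_univ j))
  -- big feasible point
  set t : ℝ := ∑ j, max (Cm / ∑ i, A j i) 0 with ht_def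
  have ht0 : 0 ≤ t := Finset.sum_nonneg fun j _ => le_max_right _ _
  have htj : ∀ j, Cm ≤ t * ∑ i, A j i := by
    intro j
    have h1 : Cm / ∑ i, A j i ≤ t :=
      le_trans (le_max_left _ _) (Finset.single_le_sum
        (f := fun j => max (Cm / ∑ i, A j i) 0) (fun j _ => le_max_right _ _)
        (Finset.mem_univ j))
    exact (div_le_iff₀ (hrow j)).1 h1
  set nstar : Fin I → ℝ := fun i => t * μ i with hnstar_def
  set B : ℝ := F nstar with hB_def
  -- all minimizers for bounded w lie in the compact box K
  set R : Fin I → ℝ := fun i => ν i * (max ((α + 1) * B / a i) 0) ^ (1 / (α + 1)) with hR_def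
  set K : Set (Fin I → ℝ) := Set.univ.pi fun i => Set.Icc 0 (R i) with hK_def
  have hKc : IsCompact K := isCompact_univ_pi fun i => isCompact_Icc
  have hmem : ∀ w : Fin J → ℝ, (∀ j, 0 ≤ w j) → (∀ j, w j ≤ Cm) → Δ w ∈ K := by
    intro w hw hwC
    have hfeas' : (∀ i, 0 ≤ nstar i) ∧ ∀ j, w j ≤ ∑ i, A j i * nstar i / μ i := by
      constructor
      · exact fun i => mul_nonneg ht0 (hμ i).le
      · intro j
        rw [show (∑ i, A j i * nstar i / μ i) = t * ∑ i, A j i from hfeas t j]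
        exact le_trans (hwC j) (htj j)
    have hFle : F (Δ w) ≤ B := by
      rcases eq_or_ne nstar (Δ w) with h | h
      · rw [← h]
      · exact ((hΔ w hw).2 nstar hfeas' h).le
    intro i _
    exact ⟨(hΔ w hw).1.1 i, hcoord B (Δ w) (hΔ w hw).1.1 hFle i⟩
  -- constants for perturbed feasible points
  set sl : ℝ := ∑ j, max ((1:ℝ) / ∑ i, A j i) 0 with hsl_def
  have hsl0 : 0 ≤ sl := Finset.sum_nonneg fun j _ => le_max_right _ _
  have hslj : ∀ j, 1 ≤ sl * ∑ i, A j i := by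
    intro j
    have h1 : (1:ℝ) / ∑ i, A j i ≤ sl :=
      le_trans (le_max_left _ _) (Finset.single_le_sum
        (f := fun j => max ((1:ℝ) / ∑ i, A j i) 0) (fun j _ => le_max_right _ _)
        (Finset.mem_univ j))
    exact (div_le_iff₀ (hrow j)).1 h1
  set δ : ℕ → ℝ := fun k => ∑ j, max (u k j - w₀ j) 0 with hδ_def
  have hδ0 : ∀ k, 0 ≤ δ k := fun k => Finset.sum_nonneg fun j _ => le_max_right _ _
  have hδw : ∀ k j, u k j ≤ w₀ j + δ k := by
    intro k j
    have : u k j - w₀ j ≤ δ k :=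
      le_trans (le_max_left _ _) (Finset.single_le_sum
        (f := fun j => max (u k j - w₀ j) 0) (fun j _ => le_max_right _ _)
        (Finset.mem_univ j))
    linarith
  have hδlim : Filter.Tendsto δ Filter.atTop (nhds 0) := by
    have hg : Continuous fun w : Fin J → ℝ => ∑ j, max (w j - w₀ j) 0 :=
      continuous_finset_sum _ fun j _ =>
        ((continuous_apply j).sub continuous_const).max continuous_const
    have := (hg.tendsto w₀).comp hu1
    simpa [hδ_def, Function.comp_def] using this
  -- perturbed near-minimizers
  set nper : ℕ → Fin I → ℝ := fun k i => Δ w₀ i + δ k * sl * μ i with hnper_def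
  have hnperfeas : ∀ k, (∀ i, 0 ≤ nper k i) ∧ ∀ j, u k j ≤ ∑ i, A j i * nper k i / μ i := by
    intro k
    constructor
    · intro i
      have := (hΔ w₀ hw₀).1.1 i
      have : 0 ≤ δ k * sl * μ i := mul_nonneg (mul_nonneg (hδ0 k) hsl0) (hμ i).le
      positivity
    · intro j
      have hsplit : ∑ i, A j i * nper k i / μ i =
          (∑ i, A j i * Δ w₀ i / μ i) + δ k * sl * ∑ i, A j i := by
        rw [Finset.mul_sum, ← Finset.sum_add_distrib]
        refine Finset.sum_congr rfl fun i _ => ?_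
        have hμi := (hμ i).ne'
        field_simp
        ring
      rw [hsplit]
      have h1 : w₀ j ≤ ∑ i, A j i * Δ w₀ i / μ i := (hΔ w₀ hw₀).1.2 j
      have h2 : δ k ≤ δ k * sl * ∑ i, A j i := by
        have := mul_le_mul_of_nonneg_left (hslj j) (hδ0 k)
        rw [mul_one] at this
        linarith [this, mul_assoc (δ k) sl (∑ i, A j i)]
      linarith [hδw k j]
  have hnperlim : Filter.Tendsto nper Filter.atTop (nhds (Δ w₀)) := by
    rw [tendsto_pi_nhds]
    intro i
    have : Filter.Tendsto (fun k => Δ w₀ i + δ k * sl * μ i) Filter.atTop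
        (nhds (Δ w₀ i + 0 * sl * μ i)) :=
      tendsto_const_nhds.add (((hδlim.mul_const sl).mul_const (μ i)))
    simpa using this
  -- subsequence argument
  apply Filter.tendsto_of_subseq_tendsto
  intro ns hns
  obtain ⟨k₀, hk₀⟩ := Filter.eventually_atTop.1 hu2
  obtain ⟨k₁, hk₁⟩ := Filter.eventually_atTop.1 (hns.eventually_ge_atTop k₀)
  set y : ℕ → Fin I → ℝ := fun k => Δ (u (ns (k + k₁))) with hy_def
  have husk : ∀ k : ℕ, (∀ j, 0 ≤ u (ns (k + k₁)) j) :=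
    fun k => hk₀ _ (hk₁ _ (Nat.le_add_left k₁ k))
  have hyK : ∀ k, y k ∈ K := fun k => hmem _ (husk k) (fun j => hCb _ j)
  obtain ⟨m, hmK, φ, hφ, hylim⟩ := hKc.tendsto_subseq hyK
  -- the composed index sequence
  set ms : ℕ → ℕ := fun k => φ k + k₁ with hms_def
  have hmslim : Filter.Tendsto (fun k => ns (ms k)) Filter.atTop Filter.atTop :=
    hns.comp (Filter.tendsto_atTop_mono (fun k => Nat.le_add_right (φ k) k₁) hφ.tendsto_atTop)
  have huu : Filter.Tendsto (fun k => u (ns (ms k))) Filter.atTop (nhds w₀) :=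
    hu1.comp hmslim
  have hyms : ∀ k, y (φ k) = Δ (u (ns (ms k))) := fun k => rfl
  have hylim' : Filter.Tendsto (fun k => Δ (u (ns (ms k)))) Filter.atTop (nhds m) := hylim
  -- m is feasible for w₀
  have hm0 : ∀ i, 0 ≤ m i := fun i => (hmK i (Set.mem_univ i)).1
  have hmfeas : ∀ j, w₀ j ≤ ∑ i, A j i * m i / μ i := by
    intro j
    have hgc : Continuous fun n : Fin I → ℝ => ∑ i, A j i * n i / μ i :=
      continuous_finset_sum _ fun i _ => ((continuous_const.mul (continuous_apply i)).div_const _)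
    refine le_of_tendsto_of_tendsto' (tendsto_pi_nhds.1 huu j)
      ((hgc.tendsto m).comp hylim') (fun k => ?_)
    exact (hΔ _ (husk (φ k))).1.2 j
  -- F m ≤ F (Δ w₀)
  have hFm : F m ≤ F (Δ w₀) := by
    refine le_of_tendsto_of_tendsto' ((hFc.tendsto m).comp hylim')
      ((hFc.tendsto (Δ w₀)).comp (hnperlim.comp hmslim)) (fun k => ?_)
    show F (Δ (u (ns (ms k)))) ≤ F (nper (ns (ms k)))
    rcases eq_or_ne (nper (ns (ms k))) (Δ (u (ns (ms k)))) with h | h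
    · rw [← h]
    · exact ((hΔ _ (husk (φ k))).2 _ (hnperfeas (ns (ms k))) h).le
  -- conclude m = Δ w₀
  have hmeq : m = Δ w₀ := by
    by_contra hne
    exact absurd ((hΔ w₀ hw₀).2 m ⟨hm0, hmfeas⟩ hne) (not_lt.2 hFm)
  exact ⟨ms, hmeq ▸ hylim'⟩
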